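/- Let k be a perfect field of characteristic p > 0, S = k[x_1,…,x_n], e ≥ 1, q = p^e, and I ⊆ S an ideal. Let ψ : F^e_* S → S be an S-linear map. Then ψ(F^e_* I) ⊆ I if and only if there exists c ∈ (I^{[q]} : I) such that ψ(F^e_* s) = Φ_S(F^e_*(c·s)) for all s ∈ S. -/

import Mathlib

set_option linter.unusedSectionVars false


/-- The `q`-th Frobenius power `I^{[q]}` of an ideal: the ideal generated by
the `q`-th powers of the elements of `I`. -/
def frobPow {S : Type*} [CommRing S] (q : ℕ) (A : Ideal S) : Ideal S :=
  Ideal.span ((fun f => f ^ q) '' (A : Set S))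

open MvPolynomial

section FedderAux

variable {k : Type*} [Field k] (p : ℕ) (hp : p.Prime) [CharP k p] [PerfectField k]
variable (n e : ℕ)

include hp in
/-- Every polynomial decomposes as `∑_α t_α^q · x^α` over the Frobenius basis. -/
lemma fedder_decomp (s : MvPolynomial (Fin n) k) :
    ∃ t : (Fin n → Fin (p ^ e)) → MvPolynomial (Fin n) k,
      s = ∑ α, (t α) ^ p ^ e * ∏ i, X i ^ (α i : ℕ) := by
  haveI := Fact.mk hp
  have hq : 0 < p ^ e := pow_pos hp.pos e
  induction s using MvPolynomial.induction_on' with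
  | monomial m a =>
    obtain ⟨b, hb⟩ := (bijective_iterateFrobenius k p e).2 a
    rw [iterateFrobenius_def] at hb
    set β : Fin n → Fin (p ^ e) := fun i => ⟨m i % p ^ e, Nat.mod_lt _ hq⟩ with hβ
    refine ⟨fun α => if α = β then C b * ∏ i, X i ^ (m i / p ^ e) else 0, ?_⟩
    rw [Finset.sum_eq_single β]
    · dsimp only
      rw [if_pos rfl, mul_pow, ← C_pow, ← Finset.prod_pow, hb, mul_assoc,
        ← Finset.prod_mul_distrib]
      rw [monomial_eq, Finsupp.prod_fintype _ _ (fun i => pow_zero _)]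
      congr 1
      apply Finset.prod_congr rfl
      intro i _
      rw [← pow_mul, ← pow_add]
      congr 1
      exact (Nat.div_add_mod' (m i) (p ^ e)).symm
    · intro α _ hα
      simp only [if_neg hα, zero_pow hq.ne', zero_mul]
    · intro h; exact absurd (Finset.mem_univ β) h
  | add f g hf hg =>
    obtain ⟨t1, ht1⟩ := hf
    obtain ⟨t2, ht2⟩ := hg
    refine ⟨t1 + t2, ?_⟩
    rw [ht1, ht2, ← Finset.sum_add_distrib]
    apply Finset.sum_congr rfl
    intro α _
    rw [Pi.add_apply, add_pow_char_pow, add_mul]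

variable (Φ : MvPolynomial (Fin n) k → MvPolynomial (Fin n) k)
variable (hΦlin : ∀ s f, Φ (s ^ p ^ e * f) = s * Φ f)
variable (hΦbasis : ∀ α : Fin n → Fin (p ^ e),
      Φ (∏ i : Fin n, X i ^ (α i : ℕ)) =
        if ∀ i, (α i : ℕ) = p ^ e - 1 then 1 else 0)

include hp hΦlin hΦbasis in
/-- The key delta computation on shifted monomials. -/
lemma fedder_delta (α β : Fin n → Fin (p ^ e)) :
    Φ (∏ i, X i ^ (p ^ e - 1 - (α i : ℕ) + β i)) = if α = β then 1 else 0 := by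
  have hq : 0 < p ^ e := pow_pos hp.pos e
  set d : Fin n → ℕ := fun i => if (β i : ℕ) ≤ α i then 0 else 1 with hd
  have hrlt : ∀ i : Fin n,
      (if (β i : ℕ) ≤ α i then p ^ e - 1 - (α i : ℕ) + β i
        else (β i : ℕ) - α i - 1) < p ^ e := by
    intro i
    have h1 := (α i).isLt
    have h2 := (β i).isLt
    split <;> omega
  set r : Fin n → Fin (p ^ e) := fun i => ⟨_, hrlt i⟩ with hr
  have key : ∏ i, (X i : MvPolynomial (Fin n) k) ^ (p ^ e - 1 - (α i : ℕ) + β i)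
      = (∏ i, X i ^ d i) ^ p ^ e * ∏ i, (X i : MvPolynomial (Fin n) k) ^ (r i : ℕ) := by
    rw [← Finset.prod_pow, ← Finset.prod_mul_distrib]
    apply Finset.prod_congr rfl
    intro i _
    rw [← pow_mul, ← pow_add]
    congr 1
    have h1 := (α i).isLt
    have h2 := (β i).isLt
    simp only [hd, hr]
    split <;> omega
  rw [key, hΦlin, hΦbasis r]
  by_cases h : α = β
  · subst h
    have hd0 : ∀ i : Fin n, d i = 0 := fun i => if_pos le_rfl
    have hr1 : ∀ i, (r i : ℕ) = p ^ e - 1 := by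
      intro i
      have h1 := (α i).isLt
      simp only [hr, if_pos le_rfl]
      omega
    have hx : ∀ x : Fin n, p ^ e - 1 - (α x : ℕ) + α x = p ^ e - 1 := by
      intro x; have := (α x).isLt; omega
    simp [hd0, hr1, hx]
  · have : ¬ ∀ i, (r i : ℕ) = p ^ e - 1 := by
      intro hall
      apply h
      funext i
      have h1 := (α i).isLt
      have h2 := (β i).isLt
      have := hall i
      simp only [hr] at this
      apply Fin.ext
      split at this <;> omega
    rw [if_neg this, if_neg h, mul_zero]

variable (hΦadd : ∀ f g, Φ (f + g) = Φ f + Φ g)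

include hp hΦadd hΦlin hΦbasis in
lemma fedder_eval (w : (Fin n → Fin (p ^ e)) → MvPolynomial (Fin n) k)
    (β : Fin n → Fin (p ^ e)) :
    Φ (∑ α, (w α) ^ p ^ e * ∏ i, X i ^ (p ^ e - 1 - (α i : ℕ) + β i)) = w β := by
  have hsum : Φ (∑ α, (w α) ^ p ^ e * ∏ i, X i ^ (p ^ e - 1 - (α i : ℕ) + β i))
      = ∑ α, Φ ((w α) ^ p ^ e * ∏ i, X i ^ (p ^ e - 1 - (α i : ℕ) + β i)) :=
    map_sum (AddMonoidHom.mk' Φ hΦadd) _ Finset.univ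
  rw [hsum]
  simp only [hΦlin, fedder_delta p hp n e Φ hΦlin hΦbasis]
  simp [Finset.sum_ite_eq']

include hp hΦadd hΦlin hΦbasis in
lemma fedder_eval' (w : (Fin n → Fin (p ^ e)) → MvPolynomial (Fin n) k)
    (α : Fin n → Fin (p ^ e)) :
    Φ (∑ β, (w β) ^ p ^ e * ∏ i, X i ^ (p ^ e - 1 - (α i : ℕ) + β i)) = w α := by
  have hsum : Φ (∑ β, (w β) ^ p ^ e * ∏ i, X i ^ (p ^ e - 1 - (α i : ℕ) + β i))
      = ∑ β, Φ ((w β) ^ p ^ e * ∏ i, X i ^ (p ^ e - 1 - (α i : ℕ) + β i)) :=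
    map_sum (AddMonoidHom.mk' Φ hΦadd) _ Finset.univ
  rw [hsum]
  simp only [hΦlin, fedder_delta p hp n e Φ hΦlin hΦbasis]
  simp [Finset.sum_ite_eq]

include hp hΦadd hΦlin in
/-- `Φ` (and all its multiples) maps the Frobenius power of `I` into `I`. -/
lemma fedder_frobPow_maps (I : Ideal (MvPolynomial (Fin n) k))
    {v : MvPolynomial (Fin n) k} (hv : v ∈ frobPow (p ^ e) I)
    : ∀ w, Φ (w * v) ∈ I := by
  have hΦ0 : Φ 0 = 0 := by
    have := hΦadd 0 0
    simpa using this
  induction hv using Submodule.span_induction with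
  | mem x hx =>
    intro w
    obtain ⟨g, hg, rfl⟩ := hx
    rw [mul_comm, hΦlin]
    exact Ideal.mul_mem_right _ I hg
  | zero => intro w; rw [mul_zero, hΦ0]; exact I.zero_mem
  | add x y hx hy ihx ihy =>
    intro w; rw [mul_add, hΦadd]; exact I.add_mem (ihx w) (ihy w)
  | smul a x hx ihx =>
    intro w; rw [smul_eq_mul, ← mul_assoc]; exact ihx (w * a)

end FedderAux

/-- Fedder's Lemma, part (c): an `S`-linear map `ψ : F^e_* S → S` is
compatible with `I` iff `ψ = Φ_S(c ⬝ –)` for some `c ∈ (I^{[q]} : I)`.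
Here `Φ_S` is the generator of `Hom_S(F^e_* S, S)`, characterized by being
additive, `p^e`-semilinear, and by its values on the monomial basis. -/
theorem stmt_13 {k : Type*} [Field k] (p : ℕ) (hp : p.Prime) [CharP k p]
    [PerfectField k]
    (n e : ℕ) (he : 1 ≤ e)
    (Φ : MvPolynomial (Fin n) k → MvPolynomial (Fin n) k)
    (hΦadd : ∀ f g, Φ (f + g) = Φ f + Φ g)
    (hΦlin : ∀ s f, Φ (s ^ p ^ e * f) = s * Φ f)
    (hΦbasis : ∀ α : Fin n → Fin (p ^ e),
      Φ (∏ i : Fin n, X i ^ (α i : ℕ)) =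
        if ∀ i, (α i : ℕ) = p ^ e - 1 then 1 else 0)
    (I : Ideal (MvPolynomial (Fin n) k))
    (ψ : MvPolynomial (Fin n) k → MvPolynomial (Fin n) k)
    (hadd : ∀ x y, ψ (x + y) = ψ x + ψ y)
    (hlin : ∀ s x, ψ (s ^ p ^ e * x) = s * ψ x) :
    (∀ x ∈ I, ψ x ∈ I) ↔
      ∃ c ∈ Submodule.colon (frobPow (p ^ e) I) I,
        ∀ s, ψ s = Φ (c * s) := by
  haveI := Fact.mk hp
  set c : MvPolynomial (Fin n) k :=
    ∑ α : Fin n → Fin (p ^ e), (ψ (∏ i, X i ^ (α i : ℕ))) ^ p ^ e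
      * ∏ i, X i ^ (p ^ e - 1 - (α i : ℕ)) with hc
  -- `ψ` agrees with `Φ (c * –)` everywhere
  have hcX : ∀ β : Fin n → Fin (p ^ e),
      Φ (c * ∏ i, X i ^ (β i : ℕ)) = ψ (∏ i, X i ^ (β i : ℕ)) := by
    intro β
    have hrw : c * ∏ i, X i ^ (β i : ℕ)
        = ∑ α : Fin n → Fin (p ^ e), (ψ (∏ i, X i ^ (α i : ℕ))) ^ p ^ e
            * ∏ i, X i ^ (p ^ e - 1 - (α i : ℕ) + β i) := by
      rw [hc, Finset.sum_mul]
      apply Finset.sum_congr rfl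
      intro α _
      rw [mul_assoc]
      congr 1
      rw [← Finset.prod_mul_distrib]
      exact Finset.prod_congr rfl fun i _ => (pow_add _ _ _).symm
    rw [hrw, fedder_eval p hp n e Φ hΦlin hΦbasis hΦadd _ β]
  have hmain : ∀ s, ψ s = Φ (c * s) := by
    intro s
    obtain ⟨t, ht⟩ := fedder_decomp p hp n e s
    have l2 : c * ∑ α : Fin n → Fin (p ^ e), t α ^ p ^ e * ∏ i, X i ^ (α i : ℕ)
        = ∑ α : Fin n → Fin (p ^ e), t α ^ p ^ e * (c * ∏ i, X i ^ (α i : ℕ)) := by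
      rw [Finset.mul_sum]
      exact Finset.sum_congr rfl fun α _ => by ring
    calc ψ s = ψ (∑ α : Fin n → Fin (p ^ e), t α ^ p ^ e * ∏ i, X i ^ (α i : ℕ)) := by rw [← ht]
      _ = ∑ α : Fin n → Fin (p ^ e), ψ (t α ^ p ^ e * ∏ i, X i ^ (α i : ℕ)) :=
          map_sum (AddMonoidHom.mk' ψ hadd) _ _
      _ = ∑ α : Fin n → Fin (p ^ e), t α * ψ (∏ i, X i ^ (α i : ℕ)) := by simp only [hlin]
      _ = ∑ α : Fin n → Fin (p ^ e), t α * Φ (c * ∏ i, X i ^ (α i : ℕ)) := by simp only [hcX]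
      _ = ∑ α : Fin n → Fin (p ^ e), Φ (t α ^ p ^ e * (c * ∏ i, X i ^ (α i : ℕ))) := by simp only [hΦlin]
      _ = Φ (∑ α : Fin n → Fin (p ^ e), t α ^ p ^ e * (c * ∏ i, X i ^ (α i : ℕ))) :=
          (map_sum (AddMonoidHom.mk' Φ hΦadd) _ _).symm
      _ = Φ (c * ∑ α : Fin n → Fin (p ^ e), t α ^ p ^ e * ∏ i, X i ^ (α i : ℕ)) := by rw [l2]
      _ = Φ (c * s) := by rw [← ht]
  constructor
  · intro h
    refine ⟨c, ?_, hmain⟩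
    -- every Φ (w * (c * f)) lands in I
    have hall : ∀ w, ∀ f ∈ I, Φ (w * (c * f)) ∈ I := by
      intro w f hf
      obtain ⟨u, hu⟩ := fedder_decomp p hp n e w
      have hrw : w * (c * f) = ∑ α : Fin n → Fin (p ^ e), u α ^ p ^ e
          * (c * ((∏ i, X i ^ (α i : ℕ)) * f)) := by
        rw [hu, Finset.sum_mul]
        exact Finset.sum_congr rfl fun α _ => by ring
      have hsum : Φ (∑ α : Fin n → Fin (p ^ e), u α ^ p ^ e * (c * ((∏ i, X i ^ (α i : ℕ)) * f)))
          = ∑ α : Fin n → Fin (p ^ e), Φ (u α ^ p ^ e * (c * ((∏ i, X i ^ (α i : ℕ)) * f))) :=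
        map_sum (AddMonoidHom.mk' Φ hΦadd) _ _
      rw [hrw, hsum]
      apply Ideal.sum_mem
      intro α _
      rw [hΦlin, ← hmain]
      exact Ideal.mul_mem_left I _ (h _ (Ideal.mul_mem_left I _ hf))
    rw [Submodule.mem_colon]
    intro f hf
    rw [smul_eq_mul]
    obtain ⟨t, ht⟩ := fedder_decomp p hp n e (c * f)
    have hmem : ∀ β, t β ∈ I := by
      intro β
      have hrw : (∏ i, X i ^ (p ^ e - 1 - (β i : ℕ))) * (c * f)
          = ∑ γ : Fin n → Fin (p ^ e), t γ ^ p ^ e * ∏ i, X i ^ (p ^ e - 1 - (β i : ℕ) + γ i) := by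
        rw [ht, Finset.mul_sum]
        apply Finset.sum_congr rfl
        intro γ _
        rw [mul_left_comm]
        congr 1
        rw [← Finset.prod_mul_distrib]
        exact Finset.prod_congr rfl fun i _ => (pow_add _ _ _).symm
      have hext : Φ ((∏ i, X i ^ (p ^ e - 1 - (β i : ℕ))) * (c * f)) = t β := by
        rw [hrw, fedder_eval' p hp n e Φ hΦlin hΦbasis hΦadd t β]
      rw [← hext]
      exact hall _ f hf
    rw [ht]
    apply Ideal.sum_mem
    intro β _
    exact Ideal.mul_mem_right _ _
      (Ideal.subset_span ⟨t β, hmem β, rfl⟩)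
  · rintro ⟨c', hc', heq⟩ x hx
    have hv : c' * x ∈ frobPow (p ^ e) I := by
      have := Submodule.mem_colon.1 hc' x hx
      rwa [smul_eq_mul] at this
    have := fedder_frobPow_maps p hp n e Φ hΦlin hΦadd I hv 1
    rw [one_mul] at this
    rw [heq x]
    exact this
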